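/- If G is a tree on n vertices equipped with the resistance r(u,v) = min(deg(u),deg(v)), then the cyclic cover time of the associated random walk is at most 4n². -/

import Mathlib

set_option linter.unusedSectionVars false
set_option maxHeartbeats 1000000

open Finset

/-- The minimum-degree conductance function: `c(u,v) = 1 / min(deg u, deg v)` on edges,
`0` on non-edges. -/
noncomputable def cMin {V : Type*} [Fintype V] [DecidableEq V]
    (G : SimpleGraph V) [DecidableRel G.Adj] (u v : V) : ℝ :=
  if G.Adj u v then 1 / (min (G.degree u) (G.degree v) : ℝ) else 0

/-- The sum of hitting times `H` along the cyclic ordering of the vertices given by `σ`;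
the cyclic cover time is the minimum of this quantity over all `σ`. -/
noncomputable def cycSum {V : Type*} [Fintype V] (H : V → V → ℝ)
    (σ : Fin (Fintype.card V) ≃ V) : ℝ :=
  ∑ i, H (σ i) (σ ⟨(i.val + 1) % Fintype.card V, Nat.mod_lt _ i.pos⟩)

namespace CycAux

section Lists

variable {V : Type*}

noncomputable def pathSum (H : V → V → ℝ) : List V → ℝ
  | a :: b :: t => H a b + pathSum H (b :: t)
  | _ => 0

@[simp] lemma pathSum_nil (H : V → V → ℝ) : pathSum H ([] : List V) = 0 := rfl
@[simp] lemma pathSum_single (H : V → V → ℝ) (a : V) : pathSum H [a] = 0 := rfl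
@[simp] lemma pathSum_cons_cons (H : V → V → ℝ) (a b : V) (t : List V) :
    pathSum H (a :: b :: t) = H a b + pathSum H (b :: t) := rfl

lemma pathSum_append_cons (H : V → V → ℝ) (xs : List V) (y : V) (ys : List V) :
    pathSum H (xs ++ y :: ys) = pathSum H (xs ++ [y]) + pathSum H (y :: ys) := by
  induction xs with
  | nil => simp
  | cons a xs ih =>
    cases xs with
    | nil => simp
    | cons b xs' =>
      simp only [List.cons_append, pathSum_cons_cons] at *
      rw [ih]; ring

/-- cyclic sum of `H` along the list `l`, with junk default `d`. -/
noncomputable def cycL (H : V → V → ℝ) (l : List V) (d : V) : ℝ :=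
  pathSum H (l ++ [l.headD d])

lemma cycL_insert (H : V → V → ℝ) (htri : ∀ a b c, H a c ≤ H a b + H b c)
    (d p x : V) (l1 l2 : List V) :
    cycL H (l1 ++ p :: x :: l2) d ≤ cycL H (l1 ++ p :: l2) d + (H p x + H x p) := by
  have hhead : (l1 ++ p :: x :: l2).headD d = (l1 ++ p :: l2).headD d := by
    cases l1 <;> simp
  set h0 := (l1 ++ p :: l2).headD d with hh0
  unfold cycL
  rw [hhead, ← hh0]
  have e1 : (l1 ++ p :: x :: l2) ++ [h0] = l1 ++ p :: (x :: (l2 ++ [h0])) := by simp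
  have e2 : (l1 ++ p :: l2) ++ [h0] = l1 ++ p :: (l2 ++ [h0]) := by simp
  have A := pathSum_append_cons H l1 p (x :: (l2 ++ [h0]))
  have B := pathSum_append_cons H l1 p (l2 ++ [h0])
  rw [e1, e2, A, B]
  cases l2 with
  | nil =>
      simp only [List.nil_append, pathSum_cons_cons, pathSum_single]
      have := htri x p h0
      linarith
  | cons q l2' =>
      simp only [List.cons_append, pathSum_cons_cons]
      have := htri x p q
      linarith

lemma headD_eq_getD (l : List V) (d : V) : l.headD d = l.getD 0 d := by
  cases l <;> simp

lemma pathSum_eq_sum (H : V → V → ℝ) (d : V) (l : List V) :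
    pathSum H l = ∑ i ∈ Finset.range (l.length - 1), H (l.getD i d) (l.getD (i+1) d) := by
  induction l with
  | nil => simp
  | cons a t ih =>
    cases t with
    | nil => simp
    | cons b t' =>
      have hlen : (a :: b :: t').length - 1 = t'.length + 1 := by simp
      rw [pathSum_cons_cons, ih, hlen, Finset.sum_range_succ']
      have hlen2 : (b :: t').length - 1 = t'.length := by simp
      rw [hlen2]
      simp only [List.getD_cons_succ, List.getD_cons_zero]
      ring

lemma cycL_eq_sum (H : V → V → ℝ) (d : V) (l : List V) (hl : l ≠ []) :
    cycL H l d
      = ∑ i ∈ Finset.range l.length,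
          H (l.getD i d) (l.getD ((i+1) % l.length) d) := by
  obtain ⟨m, hm⟩ : ∃ m, l.length = m + 1 := by
    cases l with
    | nil => exact absurd rfl hl
    | cons a t => exact ⟨t.length, rfl⟩
  unfold cycL
  rw [pathSum_eq_sum H d]
  have hlen : (l ++ [l.headD d]).length - 1 = l.length := by simp
  rw [hlen, hm, Finset.sum_range_succ, Finset.sum_range_succ]
  have hgl : ∀ i < l.length, (l ++ [l.headD d]).getD i d = l.getD i d := by
    intro i hi; exact List.getD_append l _ d i hi
  have hlast : (l ++ [l.headD d]).getD (m+1) d = l.getD 0 d := by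
    have : (l ++ [l.headD d]).getD (m+1) d = l.headD d := by
      rw [List.getD_eq_getElem?_getD]
      rw [List.getElem?_append_right (by omega)]
      simp [hm]
    rw [this, headD_eq_getD]
  congr 1
  · apply Finset.sum_congr rfl
    intro i hi
    rw [Finset.mem_range] at hi
    rw [hgl i (by omega), hgl (i+1) (by omega)]
    have : (i+1) % (m+1) = i+1 := Nat.mod_eq_of_lt (by omega)
    rw [this]
  · rw [hgl m (by omega), hlast]
    have : (m+1) % (m+1) = 0 := Nat.mod_self _
    rw [this]


end Lists

section Graph

variable {V : Type*} [Fintype V] [DecidableEq V]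
variable (G : SimpleGraph V) [DecidableRel G.Adj]

lemma one_le_minDeg {u v : V} (h : G.Adj u v) :
    (1 : ℝ) ≤ (min (G.degree u) (G.degree v) : ℝ) := by
  have hu : 0 < G.degree u := (G.degree_pos_iff_exists_adj u).2 ⟨v, h⟩
  have hv : 0 < G.degree v := (G.degree_pos_iff_exists_adj v).2 ⟨u, h.symm⟩
  have : 1 ≤ min (G.degree u) (G.degree v) := le_min hu hv
  exact_mod_cast this

lemma cMin_nonneg (u v : V) : 0 ≤ cMin G u v := by
  unfold cMin
  split
  · positivity
  · exact le_refl 0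

lemma cMin_symm (u v : V) : cMin G u v = cMin G v u := by
  unfold cMin
  by_cases h : G.Adj u v
  · rw [if_pos h, if_pos h.symm, min_comm]
  · rw [if_neg h, if_neg (fun hh => h hh.symm)]

lemma cMin_pos {u v : V} (h : G.Adj u v) : 0 < cMin G u v := by
  unfold cMin
  rw [if_pos h]
  have := one_le_minDeg G h
  positivity

lemma cMin_eq_zero_of_not_adj {u v : V} (h : ¬ G.Adj u v) : cMin G u v = 0 := by
  unfold cMin; rw [if_neg h]

lemma cMin_le_ite (u v : V) : cMin G u v ≤ if G.Adj u v then (1:ℝ) else 0 := by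
  unfold cMin
  by_cases h : G.Adj u v
  · rw [if_pos h, if_pos h]
    have := one_le_minDeg G h
    rw [div_le_one (by linarith)]
    linarith
  · rw [if_neg h, if_neg h]

lemma Csum_pos (hnbr : ∀ u : V, ∃ w, G.Adj u w) (u : V) :
    0 < ∑ x, cMin G u x := by
  obtain ⟨w, hw⟩ := hnbr u
  exact Finset.sum_pos' (fun x _ => cMin_nonneg G u x)
    ⟨w, Finset.mem_univ w, cMin_pos G hw⟩

lemma rowsum_one (hnbr : ∀ u : V, ∃ w, G.Adj u w) (u : V) :
    ∑ w, cMin G u w / (∑ x, cMin G u x) = 1 := by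
  rw [← Finset.sum_div]
  exact div_self (ne_of_gt (Csum_pos G hnbr u))

variable {H : V → V → ℝ}

lemma H_nonneg (hnbr : ∀ u : V, ∃ w, G.Adj u w)
    (hH0 : ∀ v, H v v = 0)
    (hH : ∀ u v, u ≠ v → H u v = 1 + ∑ w, (cMin G u w / ∑ x, cMin G u x) * H w v) :
    ∀ u v, 0 ≤ H u v := by
  intro u v
  obtain ⟨u₀, -, hmin⟩ := Finset.exists_min_image Finset.univ (fun x => H x v)
    ⟨v, Finset.mem_univ v⟩
  have hmin' : ∀ x, H u₀ v ≤ H x v := fun x => hmin x (Finset.mem_univ x)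
  by_contra hneg
  push_neg at hneg
  have h0 : H u₀ v < 0 := lt_of_le_of_lt (hmin' u) hneg
  have hu₀v : u₀ ≠ v := by
    intro h; rw [h, hH0 v] at h0; exact lt_irrefl 0 h0
  have heq := hH u₀ v hu₀v
  have hge : (1:ℝ) + H u₀ v ≤ H u₀ v := by
    calc (1:ℝ) + H u₀ v
        = 1 + (∑ w, cMin G u₀ w / (∑ x, cMin G u₀ x)) * H u₀ v := by
          rw [rowsum_one G hnbr u₀, one_mul]
      _ = 1 + ∑ w, (cMin G u₀ w / (∑ x, cMin G u₀ x)) * H u₀ v := by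
          rw [Finset.sum_mul]
      _ ≤ 1 + ∑ w, (cMin G u₀ w / (∑ x, cMin G u₀ x)) * H w v := by
          have : ∑ w, (cMin G u₀ w / (∑ x, cMin G u₀ x)) * H u₀ v
              ≤ ∑ w, (cMin G u₀ w / (∑ x, cMin G u₀ x)) * H w v := by
            refine Finset.sum_le_sum fun w _ => ?_
            have hc : 0 ≤ cMin G u₀ w / (∑ x, cMin G u₀ x) :=
              div_nonneg (cMin_nonneg G u₀ w) (le_of_lt (Csum_pos G hnbr u₀))
            exact mul_le_mul_of_nonneg_left (hmin' w) hc
          linarith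
      _ = H u₀ v := heq.symm
  linarith

lemma walk_closed {S : Set V}
    (hS : ∀ ⦃x⦄, x ∈ S → ∀ ⦃y⦄, G.Adj x y → y ∈ S)
    {a b : V} (p : G.Walk a b) (ha : a ∈ S) : b ∈ S := by
  induction p with
  | nil => exact ha
  | cons h p ih => exact ih (hS ha h)

lemma H_triangle (hconn : G.Connected) (hnbr : ∀ u : V, ∃ w, G.Adj u w)
    (hH0 : ∀ v, H v v = 0)
    (hH : ∀ u v, u ≠ v → H u v = 1 + ∑ w, (cMin G u w / ∑ x, cMin G u x) * H w v) :
    ∀ a b c, H a c ≤ H a b + H b c := by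
  have hnn := H_nonneg G hnbr hH0 hH
  intro a v w
  by_cases hvw : v = w
  · subst hvw; rw [hH0]; linarith [hnn a v]
  set g : V → ℝ := fun y => H y v + H v w - H y w with hg
  suffices hgoal : 0 ≤ g a by simpa [hg] using hgoal
  by_contra hneg
  push_neg at hneg
  obtain ⟨u₀, -, hmin⟩ := Finset.exists_min_image Finset.univ g ⟨a, Finset.mem_univ a⟩
  have hmin' : ∀ x, g u₀ ≤ g x := fun x => hmin x (Finset.mem_univ x)
  have hm0 : g u₀ < 0 := lt_of_le_of_lt (hmin' a) hneg
  have hgv : g v = 0 := by simp [hg, hH0]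
  have hgw : 0 ≤ g w := by
    simp only [hg, hH0]
    have := hnn w v
    have := hnn v w
    simp
    linarith
  -- harmonicity off {v, w}
  have hharm : ∀ x, x ≠ v → x ≠ w →
      ∑ y, (cMin G x y / ∑ z, cMin G x z) * g y = g x := by
    intro x hxv hxw
    have h1 := hH x v hxv
    have h2 := hH x w hxw
    have e : ∀ y, (cMin G x y / ∑ z, cMin G x z) * g y
        = (cMin G x y / ∑ z, cMin G x z) * H y v
          + (cMin G x y / ∑ z, cMin G x z) * H v w
          - (cMin G x y / ∑ z, cMin G x z) * H y w := by
      intro y; simp only [hg]; ring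
    rw [Finset.sum_congr rfl (fun y _ => e y)]
    rw [Finset.sum_sub_distrib, Finset.sum_add_distrib, ← Finset.sum_mul,
      rowsum_one G hnbr x, one_mul]
    have hv' : ∑ y, (cMin G x y / ∑ z, cMin G x z) * H y v = H x v - 1 := by
      linarith
    have hw' : ∑ y, (cMin G x y / ∑ z, cMin G x z) * H y w = H x w - 1 := by
      linarith
    rw [hv', hw']
    simp only [hg]; ring
  -- the minimizing set is closed under adjacency
  set S : Set V := {x | g x = g u₀} with hSdef
  have hclosed : ∀ ⦃x⦄, x ∈ S → ∀ ⦃y⦄, G.Adj x y → y ∈ S := by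
    intro x hx y hxy
    have hgx : g x = g u₀ := hx
    have hxv : x ≠ v := by intro h; rw [h, hgv] at hgx; linarith
    have hxw : x ≠ w := by intro h; rw [h] at hgx; linarith
    have hx' := hharm x hxv hxw
    have hzero : ∑ z, (cMin G x z / ∑ t, cMin G x t) * (g z - g u₀) = 0 := by
      have expand : ∀ z, (cMin G x z / ∑ t, cMin G x t) * (g z - g u₀)
          = (cMin G x z / ∑ t, cMin G x t) * g z
            - (cMin G x z / ∑ t, cMin G x t) * g u₀ := fun z => by ring
      rw [Finset.sum_congr rfl fun z _ => expand z, Finset.sum_sub_distrib,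
        ← Finset.sum_mul, rowsum_one G hnbr x, one_mul, hx', hgx]
      ring
    have hnonneg : ∀ z ∈ Finset.univ,
        0 ≤ (cMin G x z / ∑ t, cMin G x t) * (g z - g u₀) := by
      intro z _
      apply mul_nonneg
      · exact div_nonneg (cMin_nonneg G x z) (le_of_lt (Csum_pos G hnbr x))
      · linarith [hmin' z]
    have hall := (Finset.sum_eq_zero_iff_of_nonneg hnonneg).1 hzero
    have hy := hall y (Finset.mem_univ y)
    have hcy : 0 < cMin G x y / ∑ t, cMin G x t :=
      div_pos (cMin_pos G hxy) (Csum_pos G hnbr x)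
    have : g y - g u₀ = 0 := by
      by_contra hne
      exact hne (by
        have := mul_eq_zero.1 hy
        rcases this with h' | h'
        · exact absurd h' (ne_of_gt hcy)
        · exact h')
    show g y = g u₀
    linarith
  have hu₀S : u₀ ∈ S := rfl
  obtain ⟨p⟩ := hconn u₀ v
  have hvS : v ∈ S := walk_closed G hclosed p hu₀S
  have : g v = g u₀ := hvS
  rw [hgv] at this
  linarith


lemma sub_identity (hnbr : ∀ u : V, ∃ w, G.Adj u w)
    (hH0 : ∀ v, H v v = 0)
    (hH : ∀ u v, u ≠ v → H u v = 1 + ∑ w, (cMin G u w / ∑ x, cMin G u x) * H w v)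
    {u v : V} (hadj : G.Adj u v) (S : Finset V) (huS : u ∈ S) (hvS : v ∉ S)
    (hcross : ∀ x ∈ S, ∀ y, y ∉ S → G.Adj x y → x = u ∧ y = v) :
    cMin G u v * H u v = ∑ x ∈ S, (∑ y, cMin G x y) := by
  -- multiplied-out equations
  have heq : ∀ x ∈ S, (∑ y, cMin G x y) * H x v
      = (∑ y, cMin G x y) + ∑ y, cMin G x y * H y v := by
    intro x hx
    have hxv : x ≠ v := fun h => hvS (h ▸ hx)
    have hS0 : (0:ℝ) < ∑ y, cMin G x y := Csum_pos G hnbr x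
    have := hH x v hxv
    rw [this, mul_add, mul_one, Finset.mul_sum]
    congr 1
    refine Finset.sum_congr rfl fun y _ => ?_
    field_simp
  -- sum the equations over S
  have hsum : ∑ x ∈ S, (∑ y, cMin G x y) * H x v
      = ∑ x ∈ S, (∑ y, cMin G x y) + ∑ x ∈ S, ∑ y, cMin G x y * H y v := by
    rw [← Finset.sum_add_distrib]
    exact Finset.sum_congr rfl heq
  -- analyze the double sum
  have hsplit : ∀ x, (∑ y, cMin G x y * H y v)
      = ∑ y ∈ Finset.univ \ S, cMin G x y * H y v + ∑ y ∈ S, cMin G x y * H y v :=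
    fun x => (Finset.sum_sdiff (Finset.subset_univ S)).symm
  have houter : ∀ x ∈ S, ∑ y ∈ Finset.univ \ S, cMin G x y * H y v = 0 := by
    intro x hx
    refine Finset.sum_eq_zero fun y hy => ?_
    have hyS : y ∉ S := (Finset.mem_sdiff.1 hy).2
    by_cases hxy : G.Adj x y
    · obtain ⟨-, hy2⟩ := hcross x hx y hyS hxy
      rw [hy2, hH0, mul_zero]
    · rw [cMin_eq_zero_of_not_adj G hxy, zero_mul]
  have hdouble : ∑ x ∈ S, ∑ y, cMin G x y * H y v
      = ∑ y ∈ S, (∑ x ∈ S, cMin G x y) * H y v := by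
    calc ∑ x ∈ S, ∑ y, cMin G x y * H y v
        = ∑ x ∈ S, ∑ y ∈ S, cMin G x y * H y v := by
          refine Finset.sum_congr rfl fun x hx => ?_
          rw [hsplit x, houter x hx, zero_add]
      _ = ∑ y ∈ S, ∑ x ∈ S, cMin G x y * H y v := Finset.sum_comm
      _ = ∑ y ∈ S, (∑ x ∈ S, cMin G x y) * H y v := by
          refine Finset.sum_congr rfl fun y _ => ?_
          rw [Finset.sum_mul]
  -- the column sums over S
  have hcol : ∀ y ∈ S, ∑ x ∈ S, cMin G x y
      = (∑ x, cMin G y x) - (if y = u then cMin G v u else 0) := by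
    intro y hy
    have h1 : ∑ x, cMin G x y
        = ∑ x ∈ Finset.univ \ S, cMin G x y + ∑ x ∈ S, cMin G x y :=
      (Finset.sum_sdiff (Finset.subset_univ S)).symm
    have h2 : ∑ x ∈ Finset.univ \ S, cMin G x y
        = (if y = u then cMin G v u else 0) := by
      by_cases hyu : y = u
      · subst hyu
        rw [if_pos rfl]
        refine Finset.sum_eq_single_of_mem v (Finset.mem_sdiff.2 ⟨Finset.mem_univ v, hvS⟩)
          fun x hx hxv => ?_
        have hxS : x ∉ S := (Finset.mem_sdiff.1 hx).2
        by_cases hxy : G.Adj x y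
        · obtain ⟨-, h2⟩ := hcross y hy x hxS hxy.symm
          exact absurd h2 hxv
        · exact cMin_eq_zero_of_not_adj G hxy
      · rw [if_neg hyu]
        refine Finset.sum_eq_zero fun x hx => ?_
        have hxS : x ∉ S := (Finset.mem_sdiff.1 hx).2
        by_cases hxy : G.Adj x y
        · obtain ⟨h1', -⟩ := hcross y hy x hxS hxy.symm
          exact absurd h1' hyu
        · exact cMin_eq_zero_of_not_adj G hxy
    have h3 : ∑ x, cMin G x y = ∑ x, cMin G y x :=
      Finset.sum_congr rfl fun x _ => cMin_symm G x y
    rw [← h3, h1, h2]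
    ring
  have hfinal : ∑ y ∈ S, (∑ x ∈ S, cMin G x y) * H y v
      = ∑ y ∈ S, (∑ x, cMin G y x) * H y v - cMin G v u * H u v := by
    calc ∑ y ∈ S, (∑ x ∈ S, cMin G x y) * H y v
        = ∑ y ∈ S, ((∑ x, cMin G y x) * H y v
            - (if y = u then cMin G v u else 0) * H y v) := by
          refine Finset.sum_congr rfl fun y hy => ?_
          rw [hcol y hy]; ring
      _ = ∑ y ∈ S, (∑ x, cMin G y x) * H y v
          - ∑ y ∈ S, (if y = u then cMin G v u else 0) * H y v := Finset.sum_sub_distrib _ _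
      _ = ∑ y ∈ S, (∑ x, cMin G y x) * H y v - cMin G v u * H u v := by
          congr 1
          rw [Finset.sum_congr rfl (fun y _ => ite_mul _ _ _ _)]
          have : ∀ y ∈ S, (if y = u then cMin G v u * H y v else 0 * H y v)
              = (if y = u then cMin G v u * H u v else 0) := by
            intro y _
            by_cases hyu : y = u
            · subst hyu; simp
            · simp [hyu]
          rw [Finset.sum_congr rfl this, Finset.sum_ite_eq' S u
            (fun _ => cMin G v u * H u v), if_pos huS]
  have : cMin G v u * H u v = ∑ x ∈ S, (∑ y, cMin G x y) := by
    have := hsum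
    rw [hdouble, hfinal] at this
    linarith
  rw [cMin_symm G u v]
  exact this


lemma commute_eq (hacyc : G.IsAcyclic) (hnbr : ∀ u : V, ∃ w, G.Adj u w)
    (hH0 : ∀ v, H v v = 0)
    (hH : ∀ u v, u ≠ v → H u v = 1 + ∑ w, (cMin G u w / ∑ x, cMin G u x) * H w v)
    {u v : V} (hadj : G.Adj u v) :
    cMin G u v * (H u v + H v u) = ∑ x, ∑ y, cMin G x y := by
  classical
  set G' : SimpleGraph V := G \ SimpleGraph.fromEdgeSet {s(u, v)} with hG'
  have hG'adj : ∀ x y : V, G'.Adj x y ↔ G.Adj x y ∧ s(x, y) ≠ s(u, v) := by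
    intro x y
    rw [hG', SimpleGraph.sdiff_adj, SimpleGraph.fromEdgeSet_adj]
    constructor
    · rintro ⟨h1, h2⟩
      refine ⟨h1, fun he => h2 ⟨by simp [he], h1.ne⟩⟩
    · rintro ⟨h1, h2⟩
      exact ⟨h1, fun he => h2 (by simpa using he.1)⟩
  set S : Finset V := Finset.univ.filter (fun x => G'.Reachable x u) with hS
  have huS : u ∈ S := by
    rw [hS, Finset.mem_filter]
    exact ⟨Finset.mem_univ u, SimpleGraph.Reachable.refl u⟩
  have hbridge : ¬ G'.Reachable u v := by
    have hB := (SimpleGraph.isAcyclic_iff_forall_edge_isBridge.1 hacyc)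
      (show s(u,v) ∈ G.edgeSet from hadj)
    exact SimpleGraph.isBridge_iff.1 hB
  have hvS : v ∉ S := by
    rw [hS, Finset.mem_filter]
    rintro ⟨-, hreach⟩
    exact hbridge hreach.symm
  have hcrossS : ∀ x ∈ S, ∀ y, y ∉ S → G.Adj x y → x = u ∧ y = v := by
    intro x hx y hy hxy
    by_cases he : s(x, y) = s(u, v)
    · rcases Sym2.eq_iff.1 he with ⟨h1, h2⟩ | ⟨h1, h2⟩
      · exact ⟨h1, h2⟩
      · exfalso; apply hvS; rw [← h1]; exact hx
    · exfalso
      apply hy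
      rw [hS, Finset.mem_filter]
      refine ⟨Finset.mem_univ y, ?_⟩
      have hadj' : G'.Adj y x := (hG'adj x y).2 ⟨hxy, he⟩ |>.symm
      have hxu : G'.Reachable x u := (Finset.mem_filter.1 hx).2
      exact hadj'.reachable.trans hxu
  have h1 := sub_identity G hnbr hH0 hH hadj S huS hvS hcrossS
  set Sc : Finset V := Finset.univ \ S with hSc
  have hvSc : v ∈ Sc := Finset.mem_sdiff.2 ⟨Finset.mem_univ v, hvS⟩
  have huSc : u ∉ Sc := fun h => (Finset.mem_sdiff.1 h).2 huS
  have hcrossSc : ∀ x ∈ Sc, ∀ y, y ∉ Sc → G.Adj x y → x = v ∧ y = u := by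
    intro x hx y hy hxy
    have hxS : x ∉ S := (Finset.mem_sdiff.1 hx).2
    have hyS : y ∈ S := by
      by_contra hyS
      exact hy (Finset.mem_sdiff.2 ⟨Finset.mem_univ y, hyS⟩)
    obtain ⟨h1', h2'⟩ := hcrossS y hyS x hxS hxy.symm
    exact ⟨h2', h1'⟩
  have h2 := sub_identity G hnbr hH0 hH hadj.symm Sc hvSc huSc hcrossSc
  have hsum : ∑ x ∈ Sc, (∑ y, cMin G x y) + ∑ x ∈ S, (∑ y, cMin G x y)
      = ∑ x, ∑ y, cMin G x y := Finset.sum_sdiff (Finset.subset_univ S)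
  rw [cMin_symm G v u] at h2
  rw [mul_add, h1, h2]
  linarith


lemma exists_cross (hconn : G.Preconnected) {s : Finset V}
    (hne : s.Nonempty) (hproper : s ≠ Finset.univ) :
    ∃ p ∈ s, ∃ ℓ, ℓ ∉ s ∧ G.Adj p ℓ := by
  obtain ⟨a, ha⟩ := hne
  obtain ⟨b, hb⟩ : ∃ b, b ∉ s := by
    by_contra hcon
    push_neg at hcon
    exact hproper (Finset.eq_univ_iff_forall.2 hcon)
  obtain ⟨w⟩ := hconn b a
  clear hproper
  induction w with
  | nil => exact absurd ha hb
  | @cons x z y h q ih =>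
    by_cases hz : z ∈ s
    · exact ⟨z, hz, x, hb, h.symm⟩
    · exact ih ha hz

lemma headD_append_cons (l1 : List V) (a : V) (l2 l2' : List V) (d : V) :
    (l1 ++ a :: l2).headD d = (l1 ++ a :: l2').headD d := by
  cases l1 <;> simp

/-- one growth step -/
lemma grow_step (H : V → V → ℝ) (r : V) (K : ℝ)
    (htri : ∀ a b c, H a c ≤ H a b + H b c)
    (hcomm : ∀ p ℓ, G.Adj p ℓ → H p ℓ + H ℓ p ≤ K * G.degree ℓ)
    {s : Finset V} (hr : r ∈ s) {p ℓ : V} (hp : p ∈ s) (hl : ℓ ∉ s)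
    (hadj : G.Adj p ℓ)
    (l : List V) (hnd : l.Nodup) (hmem : ∀ x, x ∈ l ↔ x ∈ s)
    (hhead : l.headD r = r)
    (hbound : cycL H l r ≤ K * ∑ x ∈ s.erase r, (G.degree x : ℝ)) :
    ∃ L : List V, L.Nodup ∧ (∀ x, x ∈ L ↔ x ∈ insert ℓ s) ∧ L.headD r = r ∧
      cycL H L r ≤ K * ∑ x ∈ (insert ℓ s).erase r, (G.degree x : ℝ) := by
  have hpl : p ∈ l := (hmem p).2 hp
  obtain ⟨l1, l2, rfl⟩ := List.append_of_mem hpl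
  refine ⟨l1 ++ p :: ℓ :: l2, ?_, ?_, ?_, ?_⟩
  · -- nodup via permutation
    have hperm : (l1 ++ p :: ℓ :: l2).Perm (ℓ :: (l1 ++ p :: l2)) := by
      have h1 : l1 ++ p :: ℓ :: l2 = (l1 ++ [p]) ++ ℓ :: l2 := by simp
      have h2 : (l1 ++ [p]) ++ l2 = l1 ++ p :: l2 := by simp
      rw [h1]
      exact List.perm_middle.trans (by rw [h2])
    rw [hperm.nodup_iff, List.nodup_cons]
    exact ⟨fun h => hl ((hmem ℓ).1 h), hnd⟩
  · intro x
    have hperm : (l1 ++ p :: ℓ :: l2).Perm (ℓ :: (l1 ++ p :: l2)) := by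
      have h1 : l1 ++ p :: ℓ :: l2 = (l1 ++ [p]) ++ ℓ :: l2 := by simp
      have h2 : (l1 ++ [p]) ++ l2 = l1 ++ p :: l2 := by simp
      rw [h1]
      exact List.perm_middle.trans (by rw [h2])
    rw [hperm.mem_iff, List.mem_cons, hmem x, Finset.mem_insert]
  · rw [headD_append_cons l1 p (ℓ :: l2) l2 r]
    exact hhead
  · have hstep := cycL_insert H htri r p ℓ l1 l2
    have hlr : ℓ ≠ r := fun h => hl (h ▸ hr)
    have hset : (insert ℓ s).erase r = insert ℓ (s.erase r) :=
      Finset.erase_insert_of_ne hlr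
    have hnotin : ℓ ∉ s.erase r := fun h => hl (Finset.mem_of_mem_erase h)
    rw [hset, Finset.sum_insert hnotin, mul_add]
    have := hcomm p ℓ hadj
    linarith

/-- grow from `{r}` to `univ` -/
lemma grow (H : V → V → ℝ) (r : V) (K : ℝ)
    (htri : ∀ a b c, H a c ≤ H a b + H b c)
    (hcomm : ∀ p ℓ, G.Adj p ℓ → H p ℓ + H ℓ p ≤ K * G.degree ℓ)
    (hconn : G.Preconnected) (hH0 : H r r = 0) :
    ∃ l : List V, l.Nodup ∧ (∀ x, x ∈ l) ∧ l.headD r = r ∧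
      cycL H l r ≤ K * ∑ x ∈ Finset.univ.erase r, (G.degree x : ℝ) := by
  -- invariant
  set P : Finset V → Prop := fun s => ∃ l : List V, l.Nodup ∧ (∀ x, x ∈ l ↔ x ∈ s) ∧
      l.headD r = r ∧ cycL H l r ≤ K * ∑ x ∈ s.erase r, (G.degree x : ℝ) with hP
  have hbase : P {r} := by
    refine ⟨[r], List.nodup_singleton r, ?_, rfl, ?_⟩
    · intro x; simp
    · have : cycL H [r] r = 0 := by
        simp [cycL, pathSum, hH0]
      rw [this]
      simp
  have hdriver : ∀ k : ℕ, ∀ s : Finset V, r ∈ s → P s →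
      (Finset.univ \ s).card = k → P Finset.univ := by
    intro k
    induction k with
    | zero =>
      intro s hr hPs hcard
      have : Finset.univ \ s = ∅ := Finset.card_eq_zero.1 hcard
      have hs : s = Finset.univ := by
        apply Finset.eq_univ_of_forall
        intro x
        by_contra hx
        have : x ∈ Finset.univ \ s := Finset.mem_sdiff.2 ⟨Finset.mem_univ x, hx⟩
        rw [‹Finset.univ \ s = ∅›] at this
        exact absurd this (Finset.notMem_empty x)
      rwa [hs] at hPs
    | succ k ih =>
      intro s hr hPs hcard
      have hproper : s ≠ Finset.univ := by
        intro h
        rw [h, Finset.sdiff_self] at hcard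
        simp at hcard
      obtain ⟨p, hp, ℓ, hl, hadj⟩ := exists_cross G hconn ⟨r, hr⟩ hproper
      obtain ⟨l, hnd, hmem, hhead, hbound⟩ := hPs
      have hnext : P (insert ℓ s) :=
        grow_step G H r K htri hcomm hr hp hl hadj l hnd hmem hhead hbound
      have hcard' : (Finset.univ \ insert ℓ s).card = k := by
        have : Finset.univ \ insert ℓ s = (Finset.univ \ s).erase ℓ := by
          ext x
          simp only [Finset.mem_sdiff, Finset.mem_univ, true_and, Finset.mem_insert,
            Finset.mem_erase]
          tauto
        rw [this, Finset.card_erase_of_mem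
          (Finset.mem_sdiff.2 ⟨Finset.mem_univ ℓ, hl⟩), hcard]
        omega
      exact ih (insert ℓ s) (Finset.mem_insert_of_mem hr) hnext hcard'
  obtain ⟨l, hnd, hmem, hhead, hbound⟩ :=
    hdriver (Finset.univ \ {r}).card {r} (Finset.mem_singleton_self r) hbase rfl
  exact ⟨l, hnd, fun x => (hmem x).2 (Finset.mem_univ x), hhead, hbound⟩


end Graph

end CycAux

open CycAux

/-- If `G` is a tree on `n` vertices, the random walk with the minimum-degree conductance
function `c(u,v) = 1 / min(deg u, deg v)` has cyclic cover time at most `4 n²`.  Here `H` is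
the hitting-time function of the random walk with transition probabilities proportional to
the conductances. -/
theorem tree_min_degree_cyclic_cover_time_le {V : Type*} [Fintype V] [DecidableEq V]
    (G : SimpleGraph V) [DecidableRel G.Adj] (hG : G.IsTree)
    (n : ℕ) (hn : n = Fintype.card V)
    (H : V → V → ℝ) (hH0 : ∀ v, H v v = 0)
    (hH : ∀ u v, u ≠ v → H u v = 1 + ∑ w, (cMin G u w / ∑ x, cMin G u x) * H w v) :
    ∃ σ : Fin (Fintype.card V) ≃ V, cycSum H σ ≤ 4 * (n : ℝ) ^ 2 := by
  have hconn : G.Connected := hG.isConnected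
  have hne : Nonempty V := hconn.nonempty
  by_cases hcard : Fintype.card V = 1
  · -- trivial case
    have hsub : Subsingleton V := by
      rw [← Fintype.card_le_one_iff_subsingleton, hcard]
    refine ⟨(Fintype.equivFin V).symm, ?_⟩
    have : cycSum H (Fintype.equivFin V).symm = 0 := by
      unfold cycSum
      refine Finset.sum_eq_zero fun i _ => ?_
      have := Subsingleton.elim
        ((Fintype.equivFin V).symm i)
        ((Fintype.equivFin V).symm ⟨(i.val + 1) % Fintype.card V, Nat.mod_lt _ i.pos⟩)
      rw [this, hH0]
    rw [this]
    positivity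
  · -- main case
    have hlt : 1 < Fintype.card V :=
      lt_of_le_of_ne (Fintype.card_pos_iff.2 hne) (Ne.symm hcard)
    have hnontriv : Nontrivial V := Fintype.one_lt_card_iff_nontrivial.1 hlt
    have hnbr : ∀ u : V, ∃ w, G.Adj u w := by
      intro u
      obtain ⟨v, hv⟩ := exists_ne u
      obtain ⟨w⟩ := hconn u v
      cases w with
      | nil => exact absurd rfl hv
      | cons h _ => exact ⟨_, h⟩
    set K : ℝ := ∑ x, ∑ y, cMin G x y with hK
    have hKnonneg : 0 ≤ K :=
      Finset.sum_nonneg fun x _ => Finset.sum_nonneg fun y _ => CycAux.cMin_nonneg G x y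
    have hdeg_sum : ∀ u : V, (∑ y, cMin G u y) ≤ (G.degree u : ℝ) := by
      intro u
      have h1 : (∑ y, cMin G u y) ≤ ∑ y, if G.Adj u y then (1:ℝ) else 0 :=
        Finset.sum_le_sum fun y _ => CycAux.cMin_le_ite G u y
      have h2 : (∑ y, if G.Adj u y then (1:ℝ) else 0) = (G.degree u : ℝ) := by
        rw [Finset.sum_boole]
        simp [SimpleGraph.degree, SimpleGraph.neighborFinset_eq_filter]
      linarith
    have hdegsum2 : (∑ x, (G.degree x : ℝ)) = 2 * (G.edgeFinset.card : ℝ) := by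
      have h := G.sum_degrees_eq_twice_card_edges
      have h2 : ((∑ v, G.degree v : ℕ) : ℝ) = ((2 * G.edgeFinset.card : ℕ) : ℝ) := by
        exact_mod_cast h
      push_cast at h2
      exact h2
    have hKle : K ≤ 2 * (G.edgeFinset.card : ℝ) := by
      rw [← hdegsum2]
      exact Finset.sum_le_sum fun x _ => hdeg_sum x
    have htri : ∀ a b c, H a c ≤ H a b + H b c :=
      CycAux.H_triangle G hconn hnbr hH0 hH
    have hcomm : ∀ p ℓ, G.Adj p ℓ → H p ℓ + H ℓ p ≤ K * G.degree ℓ := by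
      intro p ℓ hadj
      have hce := CycAux.commute_eq G hG.2 hnbr hH0 hH hadj
      set m : ℝ := (min (G.degree p) (G.degree ℓ) : ℝ) with hm
      have hm1 : (1:ℝ) ≤ m := CycAux.one_le_minDeg G hadj
      have hcval : cMin G p ℓ = 1 / m := by
        unfold cMin; rw [if_pos hadj]
      rw [hcval] at hce
      have hX : H p ℓ + H ℓ p = m * K := by
        field_simp at hce
        linarith
      rw [hX]
      have hmle : m ≤ (G.degree ℓ : ℝ) := by
        rw [hm]
        exact_mod_cast min_le_right (G.degree p) (G.degree ℓ)
      calc m * K ≤ (G.degree ℓ : ℝ) * K := by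
            exact mul_le_mul_of_nonneg_right hmle hKnonneg
        _ = K * (G.degree ℓ : ℝ) := mul_comm _ _
    obtain ⟨r⟩ := hne
    obtain ⟨l, hnd, hall, hhead, hbound⟩ :=
      CycAux.grow G H r K htri hcomm hconn.preconnected (hH0 r)
    -- build σ
    have hlenV : l.length = Fintype.card V := by
      rw [← List.toFinset_card_of_nodup hnd]
      rw [Finset.eq_univ_iff_forall.2 (fun x => List.mem_toFinset.2 (hall x))]
      exact Finset.card_univ
    have hc : Fintype.card V = l.length := hlenV.symm
    have hl0 : l ≠ [] := by
      intro h
      rw [h] at hlenV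
      simp at hlenV
      omega
    let e : Fin l.length ≃ V := List.Nodup.getEquivOfForallMemList l hnd hall
    refine ⟨(finCongr hc).trans e, ?_⟩
    -- identify cycSum with cycL
    have happ : ∀ j : Fin (Fintype.card V), ((finCongr hc).trans e) j = l.getD j.val r := by
      intro j
      have hj : j.val < l.length := by rw [hlenV]; exact j.isLt
      have h1 : ((finCongr hc).trans e) j = l.get ⟨j.val, hj⟩ := rfl
      rw [h1]; exact (List.getD_eq_get l r ⟨j.val, hj⟩).symm
    have hσ : cycSum H ((finCongr hc).trans e)
        = ∑ i ∈ Finset.range (Fintype.card V),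
            H (l.getD i r) (l.getD ((i+1) % Fintype.card V) r) := by
      unfold cycSum
      rw [← Fin.sum_univ_eq_sum_range
        (fun i => H (l.getD i r) (l.getD ((i+1) % Fintype.card V) r)) (Fintype.card V)]
      refine Finset.sum_congr rfl fun i _ => ?_
      rw [happ i, happ ⟨(i.val + 1) % Fintype.card V, Nat.mod_lt _ i.pos⟩]
    have hcyc := CycAux.cycL_eq_sum H r l hl0
    rw [hlenV] at hcyc
    rw [hσ, ← hcyc]
    -- final numeric bound
    set A : ℝ := ∑ x ∈ Finset.univ.erase r, (G.degree x : ℝ) with hA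
    set B : ℝ := ∑ x, (G.degree x : ℝ) with hB
    have hAB : A ≤ B := by
      refine Finset.sum_le_sum_of_subset_of_nonneg (Finset.erase_subset r Finset.univ)
        fun x _ _ => by positivity
    have hBval : B = 2 * (G.edgeFinset.card : ℝ) := hdegsum2
    have hB0 : 0 ≤ B := by rw [hBval]; exact mul_nonneg (by norm_num) (Nat.cast_nonneg _)
    have hEn : (G.edgeFinset.card : ℝ) ≤ (n : ℝ) := by
      have := hG.card_edgeFinset
      have hle : G.edgeFinset.card ≤ n := by omega
      exact_mod_cast hle
    have hE0 : (0:ℝ) ≤ (G.edgeFinset.card : ℝ) := Nat.cast_nonneg _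
    calc cycL H l r ≤ K * A := hbound
      _ ≤ K * B := mul_le_mul_of_nonneg_left hAB hKnonneg
      _ ≤ (2 * (G.edgeFinset.card : ℝ)) * B := mul_le_mul_of_nonneg_right hKle hB0
      _ = (2 * (G.edgeFinset.card : ℝ)) * (2 * (G.edgeFinset.card : ℝ)) := by rw [hBval]
      _ ≤ 4 * (n:ℝ) ^ 2 := by nlinarith
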